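/- Let d ≥ 2, k ≥ 2, and f ∈ T(d,n,k) with M_1(f) = {x'} a single point. Then the set of essential points of f with respect to T(d,n,k) is {x'} ∪ {x ∈ E_n^d : gcd(|x_1 - x'_1|, ..., |x_d - x'_d|) = 1}, and this set is the unique minimal teaching set of f with respect to T(d,n,k). -/

import Mathlib

open Finset in
/-- The embedding of the integer cube `{0,…,n-1}^d` into `ℝ^d`. -/
def toR {d n : ℕ} (x : Fin d → Fin n) : Fin d → ℝ := fun i => (x i : ℝ)

open Finset in
/-- `f` is a `k`-threshold function on `{0,…,n-1}^d`: its `1`-set is the solution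
set of a system of `k` linear inequalities. -/
def IsKThreshold (d n k : ℕ) (f : (Fin d → Fin n) → Bool) : Prop :=
  ∃ (a : Fin k → ℝ) (b : Fin k → Fin d → ℝ),
    ∀ x, f x = true ↔ ∀ i, ∑ j, b i j * (x j : ℝ) ≤ a i

/-- The class `T(d,n,k)` of `k`-threshold functions. -/
def TClass (d n k : ℕ) : Set ((Fin d → Fin n) → Bool) := {f | IsKThreshold d n k f}

/-- The convex hull of the `1`-set of `f` (that is, `P(f)`). -/
def hullOne (d n : ℕ) (f : (Fin d → Fin n) → Bool) : Set (Fin d → ℝ) :=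
  convexHull ℝ (toR '' {x | f x = true})

/-- `f` belongs to `T(d,n,*)`: its `1`-set equals `Conv(M₁(f)) ∩ E_n^d`. -/
def LatticeConvex {d n : ℕ} (f : (Fin d → Fin n) → Bool) : Prop :=
  ∀ x, f x = true ↔ toR x ∈ hullOne d n f

/-- The class `T(d,n,*)` of all `k`-threshold functions for all `k`. -/
def TStar (d n : ℕ) : Set ((Fin d → Fin n) → Bool) := {f | LatticeConvex f}

/-- `T` is a teaching set of `f` with respect to the class `C`. -/
def TeachingSet {α : Type*} (C : Set (α → Bool)) (f : α → Bool) (T : Set α) : Prop :=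
  ∀ g ∈ C, (∀ x ∈ T, g x = f x) → g = f

/-- `x` is an essential point of `f` with respect to the class `D`. -/
def Essential {α : Type*} (D : Set (α → Bool)) (f : α → Bool) (x : α) : Prop :=
  ∃ g ∈ D, g x ≠ f x ∧ ∀ y, y ≠ x → g y = f y

/-- The set of vertices of `P(f)` (as lattice points). -/
def VertSet (d n : ℕ) (f : (Fin d → Fin n) → Bool) : Set (Fin d → Fin n) :=
  {x | toR x ∈ Set.extremePoints ℝ (hullOne d n f)}

/-- The set `D(f) = {x ∈ M₀(f) : Conv(P(f) ∪ {x}) ∩ M₀(f) = {x}}`. -/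
def DSet (d n : ℕ) (f : (Fin d → Fin n) → Bool) : Set (Fin d → Fin n) :=
  {x | f x = false ∧
    ∀ y, toR y ∈ convexHull ℝ (toR '' {z | f z = true} ∪ {toR x}) → f y = false → y = x}

/-- The set `S(f) = {x'} ∪ {x : gcd(|x₁-x'₁|,…,|x_d-x'_d|) = 1}` for a function
whose `1`-set is the single point `x'`. -/
def SingletonEssential (d n : ℕ) (x' : Fin d → Fin n) : Set (Fin d → Fin n) :=
  {x'} ∪ {x | Finset.univ.gcd (fun j => ((x j : ℤ) - (x' j : ℤ)).natAbs) = 1}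


open Finset


/-- Bezout for a finite family of integers. -/
lemma bezout_finset {ι : Type*} [DecidableEq ι] (s : Finset ι) (m : ι → ℤ) :
    ∃ c : ι → ℤ, ∑ j ∈ s, c j * m j = (((s.gcd fun j => (m j).natAbs) : ℕ) : ℤ) := by
  classical
  induction s using Finset.induction with
  | empty => exact ⟨0, by simp⟩
  | insert _ _ ha ih =>
    rename_i a s
    obtain ⟨c, hc⟩ := ih
    set G : ℤ := (((s.gcd fun j => (m j).natAbs) : ℕ) : ℤ) with hG
    have h1 : (((insert a s).gcd fun j => (m j).natAbs : ℕ) : ℤ)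
        = (Int.gcd (m a) G : ℤ) := by
      rw [Finset.gcd_insert]
      have : Int.gcd (m a) G = Nat.gcd (m a).natAbs (s.gcd fun j => (m j).natAbs) := by
        simp [Int.gcd, hG]
      rw [this, Nat.cast_inj]
      exact gcd_eq_nat_gcd _ _
    refine ⟨fun j => if j = a then Int.gcdA (m a) G else Int.gcdB (m a) G * c j, ?_⟩
    rw [Finset.sum_insert ha, h1, Int.gcd_eq_gcd_ab]
    have h2 : ∑ j ∈ s, (if j = a then Int.gcdA (m a) G else Int.gcdB (m a) G * c j) * m j
        = Int.gcdB (m a) G * ∑ j ∈ s, c j * m j := by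
      rw [Finset.mul_sum]
      refine Finset.sum_congr rfl fun j hj => ?_
      have : j ≠ a := fun h => ha (h ▸ hj)
      simp only [this, if_false]; ring
    rw [h2, hc]
    simp only [ite_true, if_pos]
    ring


lemma exists_t {σ : Type*} (Z : Finset σ) {d : ℕ} (r : σ → Fin d → ℝ)
    (hr : ∀ z ∈ Z, ∃ j, r z j ≠ 0) :
    ∃ t : ℝ, ∀ z ∈ Z, ∑ j, r z j * t ^ (j : ℕ) ≠ 0 := by
  classical
  have hfin : (⋃ z ∈ Z, {t : ℝ | ∑ j, r z j * t ^ (j:ℕ) = 0}).Finite := by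
    refine Set.Finite.biUnion Z.finite_toSet fun z hz => ?_
    obtain ⟨j0, hj0⟩ := hr z hz
    set P : Polynomial ℝ := ∑ j : Fin d, Polynomial.C (r z j) * Polynomial.X ^ (j:ℕ) with hPdef
    have hco : P.coeff (j0:ℕ) = r z j0 := by
      rw [hPdef, Polynomial.finset_sum_coeff, Finset.sum_eq_single j0]
      · simp [Polynomial.coeff_C_mul, Polynomial.coeff_X_pow]
      · intro b _ hb
        have hne : (j0:ℕ) ≠ (b:ℕ) := fun h => hb (Fin.ext h.symm)
        simp [Polynomial.coeff_C_mul, Polynomial.coeff_X_pow, hne]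
      · simp
    have hP : P ≠ 0 := fun h => hj0 (by rw [← hco, h, Polynomial.coeff_zero])
    refine (Polynomial.finite_setOf_isRoot hP).subset ?_
    intro t ht
    simp only [Set.mem_setOf_eq] at ht ⊢
    simp [Polynomial.IsRoot, hPdef, Polynomial.eval_finset_sum, ht]
  obtain ⟨t, ht⟩ := hfin.infinite_compl.nonempty
  refine ⟨t, fun z hz h => ht ?_⟩
  exact Set.mem_biUnion hz h


lemma seg_lemma {d n k : ℕ} (g : (Fin d → Fin n) → Bool)
    (a : Fin k → ℝ) (b : Fin k → Fin d → ℝ)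
    (hg : ∀ x, g x = true ↔ ∀ i, ∑ j, b i j * (x j : ℝ) ≤ a i)
    (x' y : Fin d → Fin n) (hy : y ≠ x')
    (hgx' : g x' = true) (hgy : g y = true) :
    ∃ z : Fin d → Fin n, g z = true ∧ z ≠ x' ∧
      Finset.univ.gcd (fun j => ((z j : ℤ) - (x' j : ℤ)).natAbs) = 1 := by
  classical
  set u : Fin d → ℤ := fun j => (y j : ℤ) - (x' j : ℤ) with hu
  set G : ℕ := Finset.univ.gcd (fun j => (u j).natAbs) with hGdef
  obtain ⟨j0, hj0⟩ : ∃ j, u j ≠ 0 := by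
    by_contra h
    push_neg at h
    apply hy
    funext j
    have := h j
    simp only [hu, sub_eq_zero] at this
    exact Fin.ext (by exact_mod_cast this)
  have hGne : G ≠ 0 := by
    intro h
    rw [hGdef] at h
    have := Finset.gcd_eq_zero_iff.mp h j0 (Finset.mem_univ _)
    exact hj0 (Int.natAbs_eq_zero.mp this)
  have hG1 : 1 ≤ (G:ℤ) := by exact_mod_cast Nat.one_le_iff_ne_zero.mpr hGne
  have hdvd : ∀ j, (G:ℤ) ∣ u j := by
    intro j
    have h1 : G ∣ (u j).natAbs := Finset.gcd_dvd (Finset.mem_univ j)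
    exact dvd_trans (Int.natCast_dvd_natCast.mpr h1) (Int.natAbs_dvd.mpr dvd_rfl)
  set m : Fin d → ℤ := fun j => u j / (G:ℤ) with hmdef
  have hm : ∀ j, m j * (G:ℤ) = u j := fun j => Int.ediv_mul_cancel (hdvd j)
  have hb : ∀ j, 0 ≤ (x' j:ℤ) + m j ∧ (x' j:ℤ) + m j < n := by
    intro j
    have h1 : m j * (G:ℤ) = u j := hm j
    have h2 : 0 ≤ (x' j:ℤ) := Int.ofNat_nonneg _
    have h3 : (x' j:ℤ) < n := by exact_mod_cast (x' j).isLt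
    have h4 : 0 ≤ (x' j:ℤ) + u j := by
      have : (x' j:ℤ) + u j = (y j:ℤ) := by simp [hu]
      rw [this]; exact Int.ofNat_nonneg _
    have h5 : (x' j:ℤ) + u j < n := by
      have : (x' j:ℤ) + u j = (y j:ℤ) := by simp [hu]
      rw [this]; exact_mod_cast (y j).isLt
    rcases le_or_gt 0 (m j) with h|h
    · exact ⟨by linarith, by nlinarith⟩
    · exact ⟨by nlinarith, by linarith⟩
  set z : Fin d → Fin n := fun j => ⟨((x' j:ℤ) + m j).toNat, by have := hb j; omega⟩ with hzdef
  have hz : ∀ j, (z j : ℤ) = (x' j:ℤ) + m j := by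
    intro j
    have := hb j
    simp only [hzdef]
    omega
  have hzx : ∀ j, ((z j:ℝ)) = (x' j:ℝ) + ((m j : ℤ):ℝ) := by
    intro j
    have := hz j
    exact_mod_cast congrArg (fun t : ℤ => (t:ℝ)) this
  have hmr : ∀ j, ((m j:ℤ):ℝ) * (G:ℝ) = (y j:ℝ) - (x' j:ℝ) := by
    intro j
    have h := hm j
    simp only [hu] at h
    exact_mod_cast congrArg (fun t : ℤ => (t:ℝ)) h
  have hGR : (1:ℝ) ≤ (G:ℝ) := by exact_mod_cast hG1
  refine ⟨z, ?_, ?_, ?_⟩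
  · rw [hg]
    intro i
    have hA : ∑ j, b i j * (x' j : ℝ) ≤ a i := (hg x').mp hgx' i
    have hB : ∑ j, b i j * (y j : ℝ) ≤ a i := (hg y).mp hgy i
    have key : (∑ j, b i j * (z j : ℝ)) * (G:ℝ)
        = (∑ j, b i j * (x' j:ℝ)) * ((G:ℝ) - 1) + ∑ j, b i j * (y j:ℝ) := by
      rw [Finset.sum_mul, Finset.sum_mul, ← Finset.sum_add_distrib]
      refine Finset.sum_congr rfl fun j _ => ?_
      have h1 := hzx j
      have h2 := hmr j
      rw [h1]
      linear_combination (b i j) * h2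
    have hGpos : (0:ℝ) < (G:ℝ) := by linarith
    rw [← mul_le_mul_iff_left₀ hGpos, key]
    nlinarith [hA, hB, mul_nonneg (sub_nonneg.mpr hA) (by linarith : (0:ℝ) ≤ (G:ℝ) - 1)]
  · intro hcon
    have : m j0 ≠ 0 := by
      intro h0
      apply hj0
      rw [← hm j0, h0, zero_mul]
    apply this
    have := congrFun hcon j0
    have h2 := hz j0
    rw [this] at h2
    omega
  · have hfun : (fun j => ((z j : ℤ) - (x' j : ℤ)).natAbs) = fun j => (u j).natAbs / G := by
      funext j
      rw [hz j]
      have : (x' j:ℤ) + m j - (x' j:ℤ) = m j := by ring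
      rw [this, hmdef]
      have := Int.natAbs_ediv_of_dvd (hdvd j)
      simpa using this
    rw [hfun, hGdef]
    exact Finset.gcd_div_eq_one (Finset.mem_univ j0) (fun h => hj0 (Int.natAbs_eq_zero.mp h))

lemma pair_threshold {d n k : ℕ} (hk : 2 ≤ k) (x' x : Fin d → Fin n)
    (hgcd : Finset.univ.gcd (fun j => ((x j : ℤ) - (x' j : ℤ)).natAbs) = 1) :
    ∃ g : (Fin d → Fin n) → Bool, IsKThreshold d n k g ∧
      ∀ z, g z = true ↔ (z = x' ∨ z = x) := by
  classical
  set v : Fin d → ℤ := fun j => (x j : ℤ) - (x' j : ℤ) with hv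
  obtain ⟨w, hw⟩ := bezout_finset Finset.univ v
  rw [hgcd] at hw
  norm_num at hw
  set uu : (Fin d → Fin n) → Fin d → ℤ := fun z j => (z j : ℤ) - (x' j : ℤ) with huu
  set OnLine : (Fin d → Fin n) → Prop := fun z => ∃ mm : ℤ, ∀ j, uu z j = mm * v j with hOL
  set Bad : Finset (Fin d → Fin n) := Finset.univ.filter (fun z => ¬ OnLine z) with hBad
  set S : ℤ := ∑ j, v j * v j with hS
  have hvj0 : ∃ j, v j ≠ 0 := by
    by_contra h
    push_neg at h
    rw [Finset.sum_congr rfl (fun j _ => by rw [h j, mul_zero])] at hw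
    simp at hw
  have hSpos : 0 < S := by
    obtain ⟨j0, hj0⟩ := hvj0
    rw [hS]
    exact Finset.sum_pos' (fun j _ => mul_self_nonneg _)
      ⟨j0, Finset.mem_univ _, mul_self_pos.mpr hj0⟩
  set r : (Fin d → Fin n) → Fin d → ℤ :=
    fun z j => S * uu z j - (∑ i, uu z i * v i) * v j with hr
  have hrval : ∀ z j, r z j = S * uu z j - (∑ i, uu z i * v i) * v j := fun z j => rfl
  have hrne : ∀ z ∈ Bad, ∃ j, (r z j : ℝ) ≠ 0 := by
    intro z hz
    by_contra h
    push_neg at h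
    have hri : ∀ j, S * uu z j - (∑ i, uu z i * v i) * v j = 0 := by
      intro j
      rw [← hrval z j]
      exact_mod_cast h j
    have hcross : ∀ i j, v j * uu z i = uu z j * v i := by
      intro i j
      have hi := hri i
      have hj := hri j
      set C : ℤ := ∑ i, uu z i * v i with hC
      have h1 : S * uu z i = C * v i := by linarith
      have h2 : S * uu z j = C * v j := by linarith
      have h3 : S * (v j * uu z i) = S * (uu z j * v i) := by
        calc S * (v j * uu z i) = v j * (S * uu z i) := by ring
        _ = v j * (C * v i) := by rw [h1]
        _ = (C * v j) * v i := by ring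
        _ = (S * uu z j) * v i := by rw [h2]
        _ = S * (uu z j * v i) := by ring
      exact mul_left_cancel₀ (ne_of_gt hSpos) h3
    have honl : OnLine z := by
      refine ⟨∑ i, w i * uu z i, fun j => ?_⟩
      calc uu z j = uu z j * (∑ i, w i * v i) := by rw [hw, mul_one]
      _ = ∑ i, w i * (uu z j * v i) := by
          rw [Finset.mul_sum]; exact Finset.sum_congr rfl fun i _ => by ring
      _ = ∑ i, w i * (v j * uu z i) := Finset.sum_congr rfl fun i _ => by rw [← hcross i j]
      _ = (∑ i, w i * uu z i) * v j := by
          rw [Finset.sum_mul]; exact Finset.sum_congr rfl fun i _ => by ring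
    rw [hBad] at hz
    exact (Finset.mem_filter.mp hz).2 honl
  obtain ⟨t, ht⟩ := exists_t Bad (fun z j => (r z j : ℝ)) hrne
  set T : ℝ := ∑ i : Fin d, t ^ (i : ℕ) * ((v i : ℤ) : ℝ) with hT
  set p : Fin d → ℝ := fun j => (S : ℝ) * t ^ (j : ℕ) - T * ((v j : ℤ) : ℝ) with hp
  set tz : (Fin d → Fin n) → ℝ := fun z => ∑ j, (w j : ℝ) * ((uu z j : ℤ) : ℝ) with htz
  set pz : (Fin d → Fin n) → ℝ := fun z => ∑ j, p j * ((uu z j : ℤ) : ℝ) with hpzdef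
  have hpval : ∀ j, p j = (S : ℝ) * t ^ (j : ℕ) - T * ((v j : ℤ) : ℝ) := fun j => rfl
  have htzval : ∀ z, tz z = ∑ j, (w j : ℝ) * ((uu z j : ℤ) : ℝ) := fun z => rfl
  have hpzval : ∀ z, pz z = ∑ j, p j * ((uu z j : ℤ) : ℝ) := fun z => rfl
  -- the key identity : pz z = ∑ j, (r z j : ℝ) * t ^ j
  have hpz : ∀ z, pz z = ∑ j, (r z j : ℝ) * t ^ (j : ℕ) := by
    intro z
    set X : ℝ := ∑ j : Fin d, t ^ (j : ℕ) * ((uu z j : ℤ) : ℝ) with hX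
    set C : ℝ := ∑ i, ((uu z i : ℤ) : ℝ) * ((v i : ℤ) : ℝ) with hC
    have e1 : pz z = (S : ℝ) * X - T * C := by
      rw [hpzval]
      calc ∑ j, p j * ((uu z j : ℤ) : ℝ)
          = ∑ j : Fin d, ((S:ℝ) * (t ^ (j:ℕ) * ((uu z j : ℤ):ℝ)) - T * (((uu z j : ℤ):ℝ) * ((v j : ℤ):ℝ))) := by
            refine Finset.sum_congr rfl fun j _ => ?_
            rw [hpval]; ring
        _ = (S : ℝ) * X - T * C := by
            rw [Finset.sum_sub_distrib, ← Finset.mul_sum, ← Finset.mul_sum, hX, hC]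
    have e2 : ∑ j, (r z j : ℝ) * t ^ (j : ℕ) = (S : ℝ) * X - T * C := by
      calc ∑ j, (r z j : ℝ) * t ^ (j : ℕ)
          = ∑ j : Fin d, ((S:ℝ) * (t ^ (j:ℕ) * ((uu z j : ℤ):ℝ)) - C * (t ^ (j:ℕ) * ((v j : ℤ):ℝ))) := by
            refine Finset.sum_congr rfl fun j _ => ?_
            rw [hrval]
            push_cast
            rw [hC]
            push_cast
            ring
        _ = (S : ℝ) * X - C * T := by
            rw [Finset.sum_sub_distrib, ← Finset.mul_sum, ← Finset.mul_sum, hX, hT]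
        _ = (S : ℝ) * X - T * C := by ring
    rw [e1, e2]
  -- values on the line
  have hwR : ∑ j, (w j : ℝ) * ((v j : ℤ) : ℝ) = 1 := by exact_mod_cast hw
  have hSR : ∑ j, ((v j : ℤ) : ℝ) * ((v j : ℤ) : ℝ) = (S : ℝ) := by
    rw [hS]; push_cast; rfl
  have honline : ∀ (z : Fin d → Fin n) (mm : ℤ), (∀ j, uu z j = mm * v j) →
      pz z = 0 ∧ tz z = (mm : ℝ) := by
    intro z mm hmz
    have hmzR : ∀ j, ((uu z j : ℤ) : ℝ) = (mm : ℝ) * ((v j : ℤ) : ℝ) := by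
      intro j; exact_mod_cast congrArg (fun s : ℤ => (s : ℝ)) (hmz j)
    constructor
    · rw [hpzval]
      calc ∑ j, p j * ((uu z j : ℤ) : ℝ)
          = ∑ j : Fin d, (((mm:ℝ) * (S:ℝ)) * (t ^ (j:ℕ) * ((v j : ℤ):ℝ))
              - ((mm:ℝ) * T) * (((v j : ℤ):ℝ) * ((v j : ℤ):ℝ))) := by
            refine Finset.sum_congr rfl fun j _ => ?_
            rw [hpval, hmzR]; ring
        _ = ((mm:ℝ) * (S:ℝ)) * T - ((mm:ℝ) * T) * (S:ℝ) := by
            rw [Finset.sum_sub_distrib, ← Finset.mul_sum, ← Finset.mul_sum, hT, hSR]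
        _ = 0 := by ring
    · rw [htzval]
      calc ∑ j, (w j : ℝ) * ((uu z j : ℤ) : ℝ)
          = ∑ j, (mm : ℝ) * ((w j : ℝ) * ((v j : ℤ):ℝ)) := by
            refine Finset.sum_congr rfl fun j _ => ?_
            rw [hmzR]; ring
        _ = (mm : ℝ) * ∑ j, (w j : ℝ) * ((v j : ℤ):ℝ) := by rw [Finset.mul_sum]
        _ = (mm : ℝ) := by rw [hwR, mul_one]
  -- choose the scaling factor M
  obtain ⟨M0, hM0⟩ := (Bad.image (fun z => (|tz z| + 1) / |pz z|)).exists_le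
  set M : ℝ := max M0 0 + 1 with hM
  have hMbig : ∀ z ∈ Bad, |tz z| + 1 < M * |pz z| := by
    intro z hz
    have hpz0 : pz z ≠ 0 := by rw [hpz]; exact ht z hz
    have habs : 0 < |pz z| := abs_pos.mpr hpz0
    have h1 : (|tz z| + 1) / |pz z| ≤ M0 :=
      hM0 _ (Finset.mem_image.mpr ⟨z, hz, rfl⟩)
    have h2 : |tz z| + 1 ≤ M0 * |pz z| := by
      rw [div_le_iff₀ habs] at h1; linarith
    have h3 : M0 ≤ max M0 0 := le_max_left _ _
    nlinarith [habs, h2, h3]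
  have hMpos : (0:ℝ) < M := by
    have := le_max_right M0 0
    rw [hM]; linarith
  -- the two defining affine functions
  set c1 : Fin d → ℝ := fun j => (w j : ℝ) - M * p j with hc1
  have hc1val : ∀ j, c1 j = (w j : ℝ) - M * p j := fun _ => rfl
  set A : Fin k → ℝ := fun i =>
    if (i:ℕ) = 0 then 1 + ∑ j, c1 j * (x' j : ℝ) else ∑ j, -c1 j * (x' j : ℝ) with hA
  set B : Fin k → Fin d → ℝ := fun i => if (i:ℕ) = 0 then c1 else fun j => -c1 j with hB
  set g : (Fin d → Fin n) → Bool :=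
    fun z => decide (∀ i, ∑ j, B i j * (z j : ℝ) ≤ A i) with hgdef
  have hgiff : ∀ z, g z = true ↔ ∀ i, ∑ j, B i j * (z j : ℝ) ≤ A i := by
    intro z
    simp only [hgdef]
    exact ⟨fun h => of_decide_eq_true h, fun h => decide_eq_true h⟩
  have huuval : ∀ z (j : Fin d), ((uu z j : ℤ) : ℝ) = (z j : ℝ) - (x' j : ℝ) := by
    intro z j
    rw [huu]
    push_cast
    ring
  have hdiff : ∀ z : Fin d → Fin n,
      (∑ j, c1 j * (z j : ℝ)) - (∑ j, c1 j * (x' j : ℝ)) = tz z - M * pz z := by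
    intro z
    rw [htzval, hpzval, ← Finset.sum_sub_distrib, Finset.mul_sum, ← Finset.sum_sub_distrib]
    refine Finset.sum_congr rfl fun j _ => ?_
    rw [hc1val, huuval]
    ring
  have hg2 : ∀ z, g z = true ↔ (M * pz z ≤ tz z ∧ tz z ≤ 1 + M * pz z) := by
    intro z
    rw [hgiff]
    have hneg : ∀ y : Fin d → Fin n, ∑ j, -c1 j * (y j:ℝ) = -∑ j, c1 j * (y j:ℝ) := by
      intro y
      rw [← Finset.sum_neg_distrib]
      exact Finset.sum_congr rfl fun j _ => by ring
    have e := hdiff z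
    constructor
    · intro h
      have h0 := h ⟨0, by omega⟩
      have h1 := h ⟨1, by omega⟩
      simp only [hA, hB] at h0 h1
      norm_num at h0 h1
      constructor <;> linarith
    · rintro ⟨hlow, hhigh⟩ i
      by_cases hi : (i:ℕ) = 0
      · simp only [hA, hB, hi, if_true]
        linarith
      · simp only [hA, hB, hi, if_false]
        rw [hneg z, hneg x']
        linarith
  refine ⟨g, ⟨A, B, hgiff⟩, ?_⟩
  intro z
  rw [hg2]
  constructor
  · rintro ⟨hlow, hhigh⟩
    by_cases honl : OnLine z
    · rw [hOL] at honl
      obtain ⟨mm, hmz⟩ := honl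
      obtain ⟨hp0, ht0⟩ := honline z mm hmz
      rw [hp0, ht0] at hlow hhigh
      have hmm : mm = 0 ∨ mm = 1 := by
        have h0 : (0:ℤ) ≤ mm := by exact_mod_cast (by linarith : (0:ℝ) ≤ (mm:ℝ))
        have h1 : mm ≤ 1 := by exact_mod_cast (by linarith : (mm:ℝ) ≤ 1)
        omega
      rcases hmm with h|h
      · left
        funext j
        have hj := hmz j
        rw [h, zero_mul] at hj
        have hj' : (z j : ℤ) - (x' j : ℤ) = 0 := by rw [← hj]
        refine Fin.ext ?_
        have : (z j : ℤ) = (x' j : ℤ) := by omega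
        exact_mod_cast this
      · right
        funext j
        have hj := hmz j
        rw [h, one_mul] at hj
        have hj' : (z j : ℤ) - (x' j : ℤ) = (x j : ℤ) - (x' j : ℤ) := hj
        refine Fin.ext ?_
        have : (z j : ℤ) = (x j : ℤ) := by omega
        exact_mod_cast this
    · exfalso
      have hzBad : z ∈ Bad := by
        rw [hBad]
        exact Finset.mem_filter.mpr ⟨Finset.mem_univ _, honl⟩
      have hbig := hMbig z hzBad
      have hpz0 : pz z ≠ 0 := by rw [hpz z]; exact ht z hzBad
      rcases lt_or_gt_of_ne hpz0 with hneg'|hpos'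
      · rw [abs_of_neg hneg'] at hbig
        linarith [neg_abs_le (tz z)]
      · rw [abs_of_pos hpos'] at hbig
        linarith [le_abs_self (tz z)]
  · intro h
    rcases h with h|h
    · subst h
      have hz0 : ∀ j, uu z j = 0 * v j := by
        intro j
        rw [zero_mul, huu]
        ring
      obtain ⟨hp0, ht0⟩ := honline z 0 hz0
      rw [hp0, ht0]
      norm_num
    · subst h
      have hz1 : ∀ j, uu z j = 1 * v j := by
        intro j
        rw [one_mul, huu, hv]
      obtain ⟨hp0, ht0⟩ := honline z 1 hz1
      rw [hp0, ht0]
      norm_num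

theorem stmt10 (d n k : ℕ) (hd : 2 ≤ d) (hn : 2 ≤ n) (hk : 2 ≤ k)
    (f : (Fin d → Fin n) → Bool) (hf : IsKThreshold d n k f)
    (x' : Fin d → Fin n) (hx' : ∀ y, f y = true ↔ y = x') :
    {x | Essential (TClass d n k) f x} = SingletonEssential d n x' ∧
    TeachingSet (TClass d n k) f (SingletonEssential d n x') ∧
    (∀ T : Set (Fin d → Fin n), TeachingSet (TClass d n k) f T →
      SingletonEssential d n x' ⊆ T) := by
  classical
  have hfx' : f x' = true := (hx' x').mpr rfl
  have hffalse : ∀ y, y ≠ x' → f y = false := by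
    intro y hy
    cases hfy : f y
    · rfl
    · exact absurd ((hx' y).mp hfy) hy
  have hx'S : x' ∈ SingletonEssential d n x' := Or.inl rfl
  have hsne : ∀ s : Fin d → Fin n,
      Finset.univ.gcd (fun j => ((s j : ℤ) - (x' j : ℤ)).natAbs) = 1 → s ≠ x' := by
    intro s h heq
    subst heq
    rw [show (fun j => ((s j : ℤ) - (s j : ℤ)).natAbs) = (fun _ : Fin d => (0:ℕ)) from
      funext fun j => by simp] at h
    rw [Finset.gcd_eq_zero_iff.mpr (fun i _ => rfl)] at h
    exact one_ne_zero h.symm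
  -- every point of S is essential
  have hSess : ∀ s ∈ SingletonEssential d n x', Essential (TClass d n k) f s := by
    rintro s (rfl | hs)
    · -- the constant-false function witnesses essentiality of x'
      refine ⟨fun _ => false, ⟨fun _ => -1, fun _ _ => 0, fun z => ?_⟩, ?_, fun y hy => ?_⟩
      · constructor
        · intro h
          exact absurd h (by simp)
        · intro h
          exfalso
          have := h ⟨0, by omega⟩
          simp at this
          linarith
      · rw [hfx']
        simp
      · exact (hffalse y hy).symm
    · have hs' : Finset.univ.gcd (fun j => ((s j : ℤ) - (x' j : ℤ)).natAbs) = 1 := hs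
      obtain ⟨g, hgth, hgval⟩ := pair_threshold hk x' s hs'
      have hsx : s ≠ x' := hsne s hs'
      refine ⟨g, hgth, ?_, ?_⟩
      · rw [(hgval s).mpr (Or.inr rfl), hffalse s hsx]
        simp
      · intro y hy
        by_cases hyx : y = x'
        · subst hyx
          rw [(hgval y).mpr (Or.inl rfl), hfx']
        · have hgy : g y = false := by
            cases hgy : g y
            · rfl
            · rcases (hgval y).mp hgy with h|h
              · exact absurd h hyx
              · exact absurd h hy
          rw [hgy, hffalse y hyx]
  -- S is a teaching set
  have hteach : TeachingSet (TClass d n k) f (SingletonEssential d n x') := by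
    intro g hg hagree
    obtain ⟨ag, bg, hgab⟩ := hg
    funext y
    by_cases hyx : y = x'
    · subst hyx
      exact hagree y hx'S
    · cases hgy : g y
      · rw [hffalse y hyx]
      · exfalso
        have hgx' : g x' = true := by rw [hagree x' hx'S]; exact hfx'
        obtain ⟨z, hgz, hzx, hzgcd⟩ := seg_lemma g ag bg hgab x' y hyx hgx' hgy
        have hzz : g z = f z := hagree z (Or.inr hzgcd)
        rw [hgz, hffalse z hzx] at hzz
        exact Bool.true_eq_false_eq_False hzz
  -- every essential point is in S
  have hessS : ∀ s, Essential (TClass d n k) f s → s ∈ SingletonEssential d n x' := by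
    rintro s ⟨g, hg, hgs, hgoff⟩
    by_cases hsx : s = x'
    · subst hsx; exact hx'S
    · obtain ⟨ag, bg, hgab⟩ := hg
      have hfs : f s = false := hffalse s hsx
      have hgs' : g s = true := by
        cases h : g s
        · rw [h, hfs] at hgs; exact absurd rfl hgs
        · rfl
      have hgx'' : g x' = true := by
        rw [hgoff x' (fun h => hsx h.symm)]; exact hfx'
      obtain ⟨z, hgz, hzx, hzgcd⟩ := seg_lemma g ag bg hgab x' s hsx hgx'' hgs'
      by_cases hzs : z = s
      · exact Or.inr (hzs ▸ hzgcd)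
      · exfalso
        have hzz := hgoff z hzs
        rw [hgz, hffalse z hzx] at hzz
        exact Bool.true_eq_false_eq_False hzz
  refine ⟨?_, hteach, ?_⟩
  · ext s
    exact ⟨hessS s, hSess s⟩
  · intro T hT s hsS
    by_contra hsT
    obtain ⟨g, hgC, hgs, hgoff⟩ := hSess s hsS
    have : g = f := hT g hgC (fun y hyT => hgoff y (fun h => hsT (h ▸ hyT)))
    exact hgs (by rw [this])
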